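/- arXiv:math/0002128 — 2 statements merged into one kernel-verified Lean document; each statement's English description precedes it below -/
import Mathlib

section
/- Let (A,R) be a cotriangular Hopf algebra over k with Drinfeld element u. Then for every finite-dimensional right A-comodule V, tr(u|_V) = tr((u∘S)|_V); that is, the trace of the Drinfeld element on V equals the trace of its convolution inverse u⁻¹ = u∘S on V. -/
open TensorProduct LinearMap

noncomputable section

universe u
variable {k A : Type u} [Field k] [Ring A] [HopfAlgebra k A]

/-- The convolution product on `Hom_k(A, k)`:  `(f ∗ g)(a) = Σ f(a₁) g(a₂)`. -/
def conv1 (f g : A →ₗ[k] k) : A →ₗ[k] k :=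
  mul' k k ∘ₗ map f g ∘ₗ Coalgebra.comul

/-- The convolution product on `Hom_k(A ⊗ A, k)` (using the tensor-product coalgebra
structure of `A ⊗ A`):  `(f ∗ g)(a ⊗ b) = Σ f(a₁ ⊗ b₁) g(a₂ ⊗ b₂)`. -/
def conv2 (f g : A ⊗[k] A →ₗ[k] k) : A ⊗[k] A →ₗ[k] k :=
  mul' k k ∘ₗ map f g ∘ₗ (Coalgebra.comul : A ⊗[k] A →ₗ[k] (A ⊗[k] A) ⊗[k] (A ⊗[k] A))

/-- The counit of the coalgebra `A ⊗ A`, i.e. `a ⊗ b ↦ ε(a) ε(b)`; this is the unit of the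
convolution algebra `(A ⊗ A)*`. -/
def eps2 : A ⊗[k] A →ₗ[k] k := (Coalgebra.counit : A ⊗[k] A →ₗ[k] k)

/-- Coquasitriangularity of a linear form `R : A ⊗ A → k` with respect to a (possibly
twisted) multiplication `m` on the underlying coalgebra of `A` (with the same unit `1`):
`R` is convolution invertible and
`R(m(a⊗b) ⊗ c) = Σ R(a⊗c₁) R(b⊗c₂)`, `R(a ⊗ m(b⊗c)) = Σ R(a₁⊗c) R(a₂⊗b)`,
`R(a⊗1) = ε(a) = R(1⊗a)`, and `Σ m(b₁⊗a₁) R(a₂⊗b₂) = Σ R(a₁⊗b₁) m(a₂⊗b₂)`. -/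
structure IsCQT (m : A ⊗[k] A →ₗ[k] A) (R : A ⊗[k] A →ₗ[k] k) : Prop where
  conv_invertible : ∃ Rinv, conv2 R Rinv = eps2 ∧ conv2 Rinv R = eps2
  mul_left : R ∘ₗ map m LinearMap.id =
    mul' k k ∘ₗ map R R ∘ₗ (tensorTensorTensorComm k A A A A).toLinearMap ∘ₗ
      map LinearMap.id Coalgebra.comul
  mul_right : R ∘ₗ map LinearMap.id m =
    mul' k k ∘ₗ map R R ∘ₗ (tensorTensorTensorComm k A A A A).toLinearMap ∘ₗ
      map LinearMap.id (TensorProduct.comm k A A).toLinearMap ∘ₗ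
      map Coalgebra.comul LinearMap.id
  unit_right : ∀ a : A, R (a ⊗ₜ 1) = Coalgebra.counit a
  unit_left : ∀ a : A, R (1 ⊗ₜ a) = Coalgebra.counit a
  comm_rel : (TensorProduct.rid k A).toLinearMap ∘ₗ
      map (m ∘ₗ (TensorProduct.comm k A A).toLinearMap) R ∘ₗ
      (Coalgebra.comul : A ⊗[k] A →ₗ[k] (A ⊗[k] A) ⊗[k] (A ⊗[k] A)) =
    (TensorProduct.lid k A).toLinearMap ∘ₗ map R m ∘ₗ
      (Coalgebra.comul : A ⊗[k] A →ₗ[k] (A ⊗[k] A) ⊗[k] (A ⊗[k] A))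

/-- Cotriangularity: coquasitriangular, and the convolution inverse of `R` is `R ∘ τ`. -/
structure IsCT (m : A ⊗[k] A →ₗ[k] A) (R : A ⊗[k] A →ₗ[k] k) extends IsCQT m R : Prop where
  tri_right : conv2 R (R ∘ₗ (TensorProduct.comm k A A).toLinearMap) = eps2
  tri_left : conv2 (R ∘ₗ (TensorProduct.comm k A A).toLinearMap) R = eps2

/-- The Drinfeld element `u ∈ A*`, `u(a) = Σ R(a₂ ⊗ S(a₁))`. -/
def drinfeld (R : A ⊗[k] A →ₗ[k] k) : A →ₗ[k] k :=
  R ∘ₗ map LinearMap.id (HopfAlgebra.antipode (R := k)) ∘ₗ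
    (TensorProduct.comm k A A).toLinearMap ∘ₗ Coalgebra.comul

/-- `ρ` makes `V` into a right `A`-comodule:  `(ρ ⊗ id) ∘ ρ = (id ⊗ Δ) ∘ ρ` and
`(id ⊗ ε) ∘ ρ = id`. -/
structure IsComod (V : Type u) [AddCommGroup V] [Module k V]
    (ρ : V →ₗ[k] V ⊗[k] A) : Prop where
  coassoc : (TensorProduct.assoc k V A A).toLinearMap ∘ₗ map ρ LinearMap.id ∘ₗ ρ =
    map LinearMap.id Coalgebra.comul ∘ₗ ρ
  counit_id : (TensorProduct.rid k V).toLinearMap ∘ₗ map LinearMap.id Coalgebra.counit ∘ₗ ρ =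
    LinearMap.id

/-- The endomorphism `f|_V : v ↦ (id ⊗ f)(ρ(v))` of a right `A`-comodule `(V, ρ)` attached to a
linear form `f ∈ A*`. -/
def coact {V : Type u} [AddCommGroup V] [Module k V] (ρ : V →ₗ[k] V ⊗[k] A)
    (f : A →ₗ[k] k) : V →ₗ[k] V :=
  (TensorProduct.rid k V).toLinearMap ∘ₗ map LinearMap.id f ∘ₗ ρ

/-- Pseudoinvolutivity: `tr(S²|_C) = dim C` for every finite-dimensional subcoalgebra `C ⊆ A`. -/
def Pseudoinvolutive (k A : Type u) [Field k] [Ring A] [HopfAlgebra k A] : Prop :=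
  ∀ C : Submodule k A, FiniteDimensional k C →
    (∀ c ∈ C, Coalgebra.comul c ∈ LinearMap.range (map C.subtype C.subtype)) →
    ∀ h : ∀ x ∈ C, (HopfAlgebra.antipode (R := k) ∘ₗ HopfAlgebra.antipode (R := k)) x ∈ C,
      trace k C ((HopfAlgebra.antipode (R := k) ∘ₗ HopfAlgebra.antipode (R := k)).restrict h) =
        (Module.finrank k C : k)

/-- `c ∈ A*` is a grouplike element of the dual, i.e. an algebra homomorphism `A → k`. -/
def IsGrouplikeForm (c : A →ₗ[k] k) : Prop :=
  c 1 = 1 ∧ ∀ a b : A, c (a * b) = c a * c b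

/-- `c` is central in the convolution algebra `A*`. -/
def IsConvCentral (c : A →ₗ[k] k) : Prop :=
  ∀ f : A →ₗ[k] k, conv1 c f = conv1 f c

/-- The linear form `a ⊗ b ↦ f(a) g(b)` on `A ⊗ A`. -/
def pairForm (f g : A →ₗ[k] k) : A ⊗[k] A →ₗ[k] k := mul' k k ∘ₗ map f g

/-- The cotriangular structure
`R_c = ½ (ε⊗ε + ε⊗c + c⊗ε − c⊗c)` attached to a central grouplike `c ∈ A*` of order `≤ 2`. -/
def Rc (c : A →ₗ[k] k) : A ⊗[k] A →ₗ[k] k :=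
  (2⁻¹ : k) • (pairForm Coalgebra.counit Coalgebra.counit + pairForm Coalgebra.counit c +
    pairForm c Coalgebra.counit - pairForm c c)

/-- A submodule `W ≤ V` is a subcomodule of the comodule `(V, ρ)`. -/
def IsSubcomod {V : Type u} [AddCommGroup V] [Module k V] (ρ : V →ₗ[k] V ⊗[k] A)
    (W : Submodule k V) : Prop :=
  ∀ w ∈ W, ρ w ∈ LinearMap.range (map W.subtype (LinearMap.id : A →ₗ[k] A))

/-- A linear map between comodules is a comodule morphism. -/
def IsComodMap {V W : Type u} [AddCommGroup V] [Module k V] [AddCommGroup W] [Module k W]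
    (ρV : V →ₗ[k] V ⊗[k] A) (ρW : W →ₗ[k] W ⊗[k] A) (f : V →ₗ[k] W) : Prop :=
  ρW ∘ₗ f = map f LinearMap.id ∘ₗ ρV


/-! ### Auxiliary convolution-algebra framework -/

section ConvFramework

open Coalgebra

variable {C B B' : Type u} [AddCommGroup C] [Module k C] [Coalgebra k C]
  [Ring B] [Algebra k B] [Ring B'] [Algebra k B']

/-- Convolution product on `Hom(C, B)` for a coalgebra `C` and algebra `B`. -/
def conv' (f g : C →ₗ[k] B) : C →ₗ[k] B :=
  mul' k B ∘ₗ map f g ∘ₗ Coalgebra.comul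

/-- The unit of the convolution algebra `Hom(C, B)`. -/
def convOne' : C →ₗ[k] B := Algebra.linearMap k B ∘ₗ Coalgebra.counit

lemma conv'_apply (f g : C →ₗ[k] B) (c : C) :
    conv' f g c = mul' k B (map f g (Coalgebra.comul c)) := rfl

lemma convOne'_apply (c : C) :
    convOne' (k := k) (B := B) c = algebraMap k B (Coalgebra.counit c) := rfl

lemma conv'_one_left (f : C →ₗ[k] B) : conv' convOne' f = f := by
  have h : mul' k B ∘ₗ map (convOne' (k := k) (C := C) (B := B)) f =
      (TensorProduct.lid k B).toLinearMap ∘ₗ f.lTensor k ∘ₗ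
        (Coalgebra.counit (R := k) (A := C)).rTensor C := by
    apply TensorProduct.ext'
    intro x y
    simp [convOne'_apply, Algebra.smul_def]
  ext c
  have := LinearMap.congr_fun h (Coalgebra.comul c)
  simp only [conv'_apply, LinearMap.coe_comp, Function.comp_apply] at this ⊢
  rw [this, Coalgebra.rTensor_counit_comul]
  simp

lemma conv'_one_right (f : C →ₗ[k] B) : conv' f convOne' = f := by
  have h : mul' k B ∘ₗ map f (convOne' (k := k) (C := C) (B := B)) =
      (TensorProduct.rid k B).toLinearMap ∘ₗ f.rTensor k ∘ₗ
        (Coalgebra.counit (R := k) (A := C)).lTensor C := by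
    apply TensorProduct.ext'
    intro x y
    simp [convOne'_apply, Algebra.smul_def, Algebra.commutes]
  ext c
  have := LinearMap.congr_fun h (Coalgebra.comul c)
  simp only [conv'_apply, LinearMap.coe_comp, Function.comp_apply] at this ⊢
  rw [this, Coalgebra.lTensor_counit_comul]
  simp

lemma conv'_assoc (f g h : C →ₗ[k] B) :
    conv' (conv' f g) h = conv' f (conv' g h) := by
  have e1 : mul' k B ∘ₗ map (mul' k B ∘ₗ map f g) h =
      (mul' k B ∘ₗ map f (mul' k B ∘ₗ map g h)) ∘ₗ
        (TensorProduct.assoc k C C C).toLinearMap := by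
    apply TensorProduct.ext_threefold
    intro x y z
    simp [mul_assoc]
  ext c
  have hL : map (conv' f g) h =
      (map (mul' k B ∘ₗ map f g) h) ∘ₗ (Coalgebra.comul (R := k) (A := C)).rTensor C := by
    rw [conv']
    rw [show (mul' k B ∘ₗ map f g ∘ₗ Coalgebra.comul : C →ₗ[k] B) =
      (mul' k B ∘ₗ map f g) ∘ₗ Coalgebra.comul by rw [LinearMap.comp_assoc]]
    rw [show (h : C →ₗ[k] B) = h ∘ₗ LinearMap.id from (LinearMap.comp_id h).symm]
    rw [TensorProduct.map_comp]
    rfl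
  have hR : map f (conv' g h) =
      (map f (mul' k B ∘ₗ map g h)) ∘ₗ (Coalgebra.comul (R := k) (A := C)).lTensor C := by
    rw [conv']
    rw [show (mul' k B ∘ₗ map g h ∘ₗ Coalgebra.comul : C →ₗ[k] B) =
      (mul' k B ∘ₗ map g h) ∘ₗ Coalgebra.comul by rw [LinearMap.comp_assoc]]
    rw [show (f : C →ₗ[k] B) = f ∘ₗ LinearMap.id from (LinearMap.comp_id f).symm]
    rw [TensorProduct.map_comp]
    rfl
  simp only [conv'_apply, hL, hR, LinearMap.coe_comp, Function.comp_apply]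
  rw [← Coalgebra.coassoc_apply c]
  exact LinearMap.congr_fun e1 _

lemma conv'_inv_unique {x y z : C →ₗ[k] B} (h1 : conv' z x = convOne')
    (h2 : conv' x y = convOne') : z = y := by
  have : conv' z (conv' x y) = conv' (conv' z x) y := (conv'_assoc z x y).symm
  rw [h1, h2, conv'_one_left, conv'_one_right] at this
  exact this

lemma algHom_comp_conv' (φ : B →ₐ[k] B') (f g : C →ₗ[k] B) :
    φ.toLinearMap ∘ₗ conv' f g = conv' (φ.toLinearMap ∘ₗ f) (φ.toLinearMap ∘ₗ g) := by
  have h : φ.toLinearMap ∘ₗ mul' k B ∘ₗ map f g =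
      mul' k B' ∘ₗ map (φ.toLinearMap ∘ₗ f) (φ.toLinearMap ∘ₗ g) := by
    apply TensorProduct.ext'
    intro x y
    simp
  ext c
  simpa [conv'_apply] using LinearMap.congr_fun h (Coalgebra.comul c)

lemma algHom_comp_convOne' (φ : B →ₐ[k] B') :
    φ.toLinearMap ∘ₗ (convOne' (k := k) (C := C) (B := B)) = convOne' := by
  ext c
  simp [convOne'_apply, AlgHom.commutes]

end ConvFramework

/-! ### The antipode is an anti-coalgebra morphism -/

section AntipodeComul

open Coalgebra

local notation "S°" => HopfAlgebra.antipode (R := k) (A := A)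

/-- `τ ∘ (S ⊗ S) ∘ Δ`. -/
def rho2 : A →ₗ[k] A ⊗[k] A :=
  (TensorProduct.comm k A A).toLinearMap ∘ₗ map S° S° ∘ₗ Coalgebra.comul

lemma sum_counit_smul {b : A} {ι : Type*} (s : Coalgebra.Repr k b ι) :
    ∑ j ∈ s.index, Coalgebra.counit (R := k) (s.left j) • s.right j = b := by
  calc ∑ j ∈ s.index, Coalgebra.counit (R := k) (s.left j) • s.right j
      = TensorProduct.lid k A (∑ j ∈ s.index,
          Coalgebra.counit (R := k) (s.left j) ⊗ₜ[k] s.right j) := by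
        rw [map_sum]
        simp only [TensorProduct.lid_tmul]
    _ = TensorProduct.lid k A ((1:k) ⊗ₜ[k] b) := by
        rw [Coalgebra.sum_counit_tmul_eq s]
    _ = b := by simp

lemma inner_collapse (x b : A) {ι : Type*} (s : Coalgebra.Repr k b ι) :
    ∑ j ∈ s.index, (S° (s.left j) ⊗ₜ[k] S° x) * Coalgebra.comul (s.right j) =
      (1 : A) ⊗ₜ[k] (S° x * b) := by
  classical
  set Φ : A ⊗[k] (A ⊗[k] A) →ₗ[k] A ⊗[k] A :=
    map (mul' k A ∘ₗ map S° LinearMap.id) (LinearMap.mulLeft k (S° x)) ∘ₗ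
      (TensorProduct.assoc k A A A).symm.toLinearMap with hΦ
  have hΦ_apply : ∀ p q t : A, Φ (p ⊗ₜ (q ⊗ₜ t)) = (S° p * q) ⊗ₜ (S° x * t) := by
    intro p q t
    simp [hΦ]
  have key := Coalgebra.sum_tmul_tmul_eq (R := k) s
    (fun j => ℛ k (s.left j)) (fun j => ℛ k (s.right j))
  have key' := congrArg Φ key
  rw [map_sum, map_sum] at key'
  simp only [map_sum, hΦ_apply] at key'
  calc ∑ j ∈ s.index, (S° (s.left j) ⊗ₜ[k] S° x) * Coalgebra.comul (s.right j)
      = ∑ j ∈ s.index, ∑ l ∈ (ℛ k (s.right j)).index,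
          (S° (s.left j) * (ℛ k (s.right j)).left l) ⊗ₜ[k]
            (S° x * (ℛ k (s.right j)).right l) := by
        refine Finset.sum_congr rfl fun j _ => ?_
        rw [← (ℛ k (s.right j)).eq]
        rw [Finset.mul_sum]
        exact Finset.sum_congr rfl fun l _ => by
          simp [Algebra.TensorProduct.tmul_mul_tmul]
    _ = ∑ j ∈ s.index, ∑ l ∈ (ℛ k (s.left j)).index,
          (S° ((ℛ k (s.left j)).left l) * (ℛ k (s.left j)).right l) ⊗ₜ[k]
            (S° x * s.right j) := key'.symm
    _ = ∑ j ∈ s.index, (Coalgebra.counit (R := k) (s.left j) • (1:A)) ⊗ₜ[k]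
          (S° x * s.right j) := by
        refine Finset.sum_congr rfl fun j _ => ?_
        rw [← TensorProduct.sum_tmul]
        rw [HopfAlgebra.sum_antipode_mul_eq_smul (ℛ k (s.left j))]
    _ = ∑ j ∈ s.index, (1:A) ⊗ₜ[k]
          (S° x * (Coalgebra.counit (R := k) (s.left j) • s.right j)) := by
        refine Finset.sum_congr rfl fun j _ => ?_
        rw [TensorProduct.smul_tmul, mul_smul_comm]
    _ = (1 : A) ⊗ₜ[k] (S° x * b) := by
        rw [← TensorProduct.tmul_sum, ← Finset.mul_sum, _root_.sum_counit_smul]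

lemma conv'_rho2_comul :
    conv' (rho2 (k := k) (A := A)) Coalgebra.comul = convOne' := by
  classical
  ext a
  set r := ℛ k a with hr
  have expand : conv' (rho2 (k := k) (A := A)) Coalgebra.comul a =
      ∑ i ∈ r.index, rho2 (r.left i) * Coalgebra.comul (r.right i) := by
    rw [conv'_apply, ← r.eq, map_sum, map_sum]
    rfl
  set Ψ : A ⊗[k] (A ⊗[k] A) →ₗ[k] A ⊗[k] A :=
    mul' k (A ⊗[k] A) ∘ₗ
      map ((TensorProduct.comm k A A).toLinearMap ∘ₗ map S° S°) Coalgebra.comul ∘ₗ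
      (TensorProduct.assoc k A A A).symm.toLinearMap with hΨ
  have hΨ_apply : ∀ p q t : A, Ψ (p ⊗ₜ (q ⊗ₜ t)) =
      (S° q ⊗ₜ[k] S° p) * Coalgebra.comul t := by
    intro p q t
    simp [hΨ]
  have key := Coalgebra.sum_tmul_tmul_eq (R := k) r
    (fun i => ℛ k (r.left i)) (fun i => ℛ k (r.right i))
  have key' := congrArg Ψ key
  rw [map_sum, map_sum] at key'
  simp only [map_sum, hΨ_apply] at key'
  have lhs_eq : ∑ i ∈ r.index, rho2 (r.left i) * Coalgebra.comul (r.right i) =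
      ∑ i ∈ r.index, ∑ j ∈ (ℛ k (r.left i)).index,
        (S° ((ℛ k (r.left i)).right j) ⊗ₜ[k] S° ((ℛ k (r.left i)).left j)) *
          Coalgebra.comul (r.right i) := by
    refine Finset.sum_congr rfl fun i _ => ?_
    rw [rho2]
    simp only [LinearMap.coe_comp, Function.comp_apply]
    rw [← (ℛ k (r.left i)).eq]
    rw [map_sum, map_sum, Finset.sum_mul]
    exact Finset.sum_congr rfl fun j _ => by simp
  rw [expand, lhs_eq, key']
  have inner : ∀ i ∈ r.index,
      (∑ j ∈ (ℛ k (r.right i)).index,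
        (S° ((ℛ k (r.right i)).left j) ⊗ₜ[k] S° (r.left i)) *
          Coalgebra.comul ((ℛ k (r.right i)).right j)) =
      (1 : A) ⊗ₜ[k] (S° (r.left i) * r.right i) :=
    fun i _ => inner_collapse (r.left i) (r.right i) (ℛ k (r.right i))
  rw [Finset.sum_congr rfl inner]
  rw [← TensorProduct.tmul_sum, HopfAlgebra.sum_antipode_mul_eq_smul r]
  rw [convOne'_apply]
  simp [Algebra.algebraMap_eq_smul_one, Algebra.TensorProduct.one_def,
    TensorProduct.tmul_smul]

lemma conv'_comul_comulS :
    conv' (Coalgebra.comul (R := k) (A := A))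
      (Coalgebra.comul ∘ₗ S°) = convOne' := by
  have h0 : conv' (LinearMap.id (M := A)) S° = convOne' := by
    have := HopfAlgebra.mul_antipode_lTensor_comul (R := k) (A := A)
    rw [conv', convOne']
    rw [show map (LinearMap.id (M := A)) S° = LinearMap.lTensor A S° from rfl]
    rw [← this]
  have := congrArg (fun t => (Bialgebra.comulAlgHom k A).toLinearMap ∘ₗ t) h0
  rw [algHom_comp_conv', algHom_comp_convOne'] at this
  have e1 : (Bialgebra.comulAlgHom k A).toLinearMap ∘ₗ LinearMap.id =
      Coalgebra.comul (R := k) (A := A) := by rfl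
  have e2 : (Bialgebra.comulAlgHom k A).toLinearMap ∘ₗ S° =
      Coalgebra.comul ∘ₗ S° := by rfl
  rw [e1, e2] at this
  exact this

/-- The antipode is an anti-coalgebra morphism. -/
lemma comul_antipode' :
    Coalgebra.comul ∘ₗ S° = rho2 (k := k) (A := A) :=
  (conv'_inv_unique conv'_rho2_comul conv'_comul_comulS).symm

lemma comul_antipode_apply (a : A) :
    Coalgebra.comul (S° a) =
      (TensorProduct.comm k A A) (map S° S° (Coalgebra.comul a)) :=
  LinearMap.congr_fun (comul_antipode' (k := k) (A := A)) a

end AntipodeComul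

/-! ### Consequences of cotriangularity -/

section KIdentity

open Coalgebra

local notation "S°" => HopfAlgebra.antipode (R := k) (A := A)

variable (R : A ⊗[k] A →ₗ[k] k)

lemma eps2_eq_convOne' : (eps2 : A ⊗[k] A →ₗ[k] k) = convOne' := by
  rw [eps2, convOne']
  rw [show (Algebra.linearMap k k) = LinearMap.id from by ext; simp]
  rw [LinearMap.id_comp]

lemma conv2_eq_conv' (f g : A ⊗[k] A →ₗ[k] k) : conv2 f g = conv' f g := rfl

lemma mul_left_pt (hml : R ∘ₗ map (mul' k A) LinearMap.id =
    mul' k k ∘ₗ map R R ∘ₗ (tensorTensorTensorComm k A A A A).toLinearMap ∘ₗ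
      map LinearMap.id Coalgebra.comul) (x y b : A) {ι : Type*} (rb : Coalgebra.Repr k b ι) :
    R ((x * y) ⊗ₜ[k] b) =
      ∑ j ∈ rb.index, R (x ⊗ₜ[k] rb.left j) * R (y ⊗ₜ[k] rb.right j) := by
  have h := LinearMap.congr_fun hml ((x ⊗ₜ[k] y) ⊗ₜ[k] b)
  simp only [LinearMap.coe_comp, Function.comp_apply, map_tmul, LinearMap.id_coe, id_eq,
    LinearMap.mul'_apply, LinearEquiv.coe_coe] at h
  rw [← rb.eq] at h
  rw [h]
  rw [TensorProduct.tmul_sum, map_sum, map_sum, map_sum]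
  exact Finset.sum_congr rfl fun j _ => by
    simp [TensorProduct.tensorTensorTensorComm_tmul]

lemma conv'_RS_R (hR : IsCQT (mul' k A) R) :
    conv' (R ∘ₗ map S° LinearMap.id) R = convOne' := by
  apply TensorProduct.ext'
  intro a b
  classical
  set ra := ℛ k a
  set rb := ℛ k b
  have hcom : Coalgebra.comul (R := k) (a ⊗ₜ[k] b) =
      ∑ i ∈ ra.index, ∑ j ∈ rb.index,
        (ra.left i ⊗ₜ[k] rb.left j) ⊗ₜ[k] (ra.right i ⊗ₜ[k] rb.right j) := by
    show TensorProduct.tensorTensorTensorComm k A A A A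
      (Coalgebra.comul a ⊗ₜ Coalgebra.comul b) = _
    rw [← ra.eq, ← rb.eq]
    rw [TensorProduct.sum_tmul, map_sum]
    exact Finset.sum_congr rfl fun i _ => by
      rw [TensorProduct.tmul_sum, map_sum]
      exact Finset.sum_congr rfl fun j _ => by
        simp [TensorProduct.tensorTensorTensorComm_tmul]
  rw [conv'_apply, hcom, map_sum, map_sum]
  have step1 : ∀ i ∈ ra.index,
      (mul' k k) ((map (R ∘ₗ map S° LinearMap.id) R)
        (∑ j ∈ rb.index, (ra.left i ⊗ₜ[k] rb.left j) ⊗ₜ[k] (ra.right i ⊗ₜ[k] rb.right j))) =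
      R ((S° (ra.left i) * ra.right i) ⊗ₜ[k] b) := by
    intro i _
    rw [mul_left_pt R hR.mul_left _ _ b rb]
    rw [map_sum, map_sum]
    exact Finset.sum_congr rfl fun j _ => by simp
  rw [Finset.sum_congr rfl step1]
  rw [show ∑ i ∈ ra.index, R ((S° (ra.left i) * ra.right i) ⊗ₜ[k] b) =
      R ((∑ i ∈ ra.index, S° (ra.left i) * ra.right i) ⊗ₜ[k] b) from by
    rw [TensorProduct.sum_tmul, map_sum]]
  rw [HopfAlgebra.sum_antipode_mul_eq_smul ra]
  rw [TensorProduct.smul_tmul, TensorProduct.tmul_smul, map_smul, hR.unit_left b]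
  rw [convOne'_apply]
  show Coalgebra.counit a • Coalgebra.counit b =
    algebraMap k k (Coalgebra.counit (R := k) (a ⊗ₜ[k] b))
  rw [show Coalgebra.counit (R := k) (a ⊗ₜ[k] b) =
    Coalgebra.counit (R := k) a * Coalgebra.counit (R := k) b from by simp [smul_eq_mul, mul_comm]]
  simp [smul_eq_mul]

lemma antipode_R_eq (hR : IsCT (mul' k A) R) :
    R ∘ₗ map S° LinearMap.id = R ∘ₗ (TensorProduct.comm k A A).toLinearMap := by
  refine conv'_inv_unique (x := R) (conv'_RS_R R hR.toIsCQT) ?_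
  rw [← conv2_eq_conv', ← eps2_eq_convOne']
  exact hR.tri_right

lemma antipode_R_pt (hR : IsCT (mul' k A) R) (x y : A) :
    R (S° x ⊗ₜ[k] y) = R (y ⊗ₜ[k] x) := by
  have h := LinearMap.congr_fun (antipode_R_eq R hR) (x ⊗ₜ[k] y)
  simpa using h

lemma drinfeld_apply_of (x : A) {ι : Type*} (t : Finset ι) (p q : ι → A)
    (hx : Coalgebra.comul (R := k) x = ∑ i ∈ t, p i ⊗ₜ[k] q i) :
    drinfeld R x = ∑ i ∈ t, R (q i ⊗ₜ[k] S° (p i)) := by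
  rw [drinfeld]
  simp only [LinearMap.coe_comp, Function.comp_apply, LinearEquiv.coe_coe]
  rw [hx, map_sum, map_sum, map_sum]
  exact Finset.sum_congr rfl fun i _ => by simp

lemma drinfeld_antipode_apply_of (hR : IsCT (mul' k A) R) (x : A)
    {ι : Type*} (t : Finset ι) (p q : ι → A)
    (hx : Coalgebra.comul (R := k) x = ∑ i ∈ t, p i ⊗ₜ[k] q i) :
    drinfeld R (S° x) = ∑ i ∈ t, R (p i ⊗ₜ[k] S° (q i)) := by
  have hΔ : Coalgebra.comul (R := k) (S° x) =
      ∑ i ∈ t, S° (q i) ⊗ₜ[k] S° (p i) := by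
    rw [comul_antipode_apply, hx, map_sum, map_sum]
    exact Finset.sum_congr rfl fun i _ => by simp
  rw [drinfeld_apply_of R _ t _ _ hΔ]
  refine Finset.sum_congr rfl fun i _ => ?_
  rw [antipode_R_pt R hR (p i) (S° (S° (q i)))]
  rw [antipode_R_pt R hR (S° (q i)) (p i)]

end KIdentity

section

/-- For a cotriangular Hopf algebra `(A, R)` with Drinfeld element `u`, and
every finite-dimensional right `A`-comodule `V`, the trace of `u` on `V` equals the trace of
its convolution inverse `u⁻¹ = u ∘ S` on `V`. -/
theorem statement5 {k A : Type u} [Field k] [IsAlgClosed k] [CharZero k]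
    [Ring A] [HopfAlgebra k A]
    (R : A ⊗[k] A →ₗ[k] k) (hR : IsCT (mul' k A) R)
    (V : Type u) [AddCommGroup V] [Module k V] [FiniteDimensional k V]
    (ρ : V →ₗ[k] V ⊗[k] A) (hρ : IsComod V ρ) :
    trace k V (coact ρ (drinfeld R)) =
      trace k V (coact ρ (drinfeld R ∘ₗ HopfAlgebra.antipode (R := k))) := by
  classical
  set b : Module.Basis (Fin (Module.finrank k V)) k V := Module.finBasis k V with hb
  set φ : Fin (Module.finrank k V) → (V ⊗[k] A →ₗ[k] A) := fun i =>
    (TensorProduct.lid k A).toLinearMap ∘ₗ ((b.coord i).rTensor A) with hφ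
  have M0 : ∀ t : V ⊗[k] A, ∑ i, b i ⊗ₜ[k] φ i t = t := by
    intro t
    induction t using TensorProduct.induction_on with
    | zero => simp
    | tmul v a =>
        have hterm : ∀ i, b i ⊗ₜ[k] φ i (v ⊗ₜ[k] a) = (b.repr v i • b i) ⊗ₜ[k] a := by
          intro i
          simp only [hφ, LinearMap.coe_comp, Function.comp_apply, LinearMap.rTensor_tmul,
            LinearEquiv.coe_coe, TensorProduct.lid_tmul, Module.Basis.coord_apply]
          rw [TensorProduct.smul_tmul]
        rw [Finset.sum_congr rfl fun i _ => hterm i]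
        rw [← TensorProduct.sum_tmul]
        congr 1
        exact b.sum_repr v
    | add x y hx hy =>
        have hadd : ∀ i, b i ⊗ₜ[k] φ i (x + y) = b i ⊗ₜ[k] φ i x + b i ⊗ₜ[k] φ i y := by
          intro i
          rw [map_add, TensorProduct.tmul_add]
        rw [Finset.sum_congr rfl fun i _ => hadd i, Finset.sum_add_distrib, hx, hy]
  set c : Fin (Module.finrank k V) → Fin (Module.finrank k V) → A :=
    fun i j => φ i (ρ (b j)) with hc
  have hρb : ∀ j, ρ (b j) = ∑ i, b i ⊗ₜ[k] c i j := fun j => (M0 _).symm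
  have M1 : ∀ f : A →ₗ[k] k, trace k V (coact ρ f) = ∑ i, f (c i i) := by
    intro f
    have hco : ∀ j, coact ρ f (b j) = ∑ i, f (c i j) • b i := by
      intro j
      rw [coact]
      simp only [LinearMap.coe_comp, Function.comp_apply]
      rw [hρb j, map_sum, map_sum]
      exact Finset.sum_congr rfl fun i _ => by simp
    rw [LinearMap.trace_eq_matrix_trace k b, Matrix.trace]
    refine Finset.sum_congr rfl fun i _ => ?_
    rw [Matrix.diag]
    rw [LinearMap.toMatrix_apply, hco i, map_sum]
    rw [Finset.sum_apply']
    rw [Finset.sum_eq_single i (fun l _ hl => by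
      simp [Module.Basis.repr_self, Finsupp.single_apply, hl]) (by simp)]
    simp [Module.Basis.repr_self]
  have M2 : ∀ i j, Coalgebra.comul (R := k) (c i j) = ∑ l, c i l ⊗ₜ[k] c l j := by
    intro i j
    have h := LinearMap.congr_fun hρ.coassoc (b j)
    simp only [LinearMap.coe_comp, Function.comp_apply, LinearEquiv.coe_coe] at h
    set ψ : V ⊗[k] (A ⊗[k] A) →ₗ[k] A ⊗[k] A :=
      (TensorProduct.lid k (A ⊗[k] A)).toLinearMap ∘ₗ ((b.coord i).rTensor (A ⊗[k] A)) with hψ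
    have hψ_sum : ∀ g : Fin (Module.finrank k V) → A ⊗[k] A,
        ψ (∑ l, b l ⊗ₜ[k] g l) = g i := by
      intro g
      rw [map_sum]
      rw [Finset.sum_congr rfl fun l _ => show ψ (b l ⊗ₜ[k] g l) = b.repr (b l) i • g l from by
        simp [hψ, Module.Basis.coord_apply]]
      rw [Finset.sum_eq_single i (fun l _ hl => by
        simp [Module.Basis.repr_self, Finsupp.single_apply, hl]) (by simp)]
      simp [Module.Basis.repr_self]
    have hRHS : map LinearMap.id Coalgebra.comul (ρ (b j)) =
        ∑ l, b l ⊗ₜ[k] Coalgebra.comul (R := k) (c l j) := by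
      rw [hρb j, map_sum]
      exact Finset.sum_congr rfl fun l _ => by simp
    have hLHS : (TensorProduct.assoc k V A A) (map ρ LinearMap.id (ρ (b j))) =
        ∑ m, b m ⊗ₜ[k] (∑ l, c m l ⊗ₜ[k] c l j) := by
      rw [hρb j, map_sum, map_sum]
      rw [Finset.sum_congr rfl fun l _ =>
        show (TensorProduct.assoc k V A A) ((map ρ LinearMap.id) (b l ⊗ₜ[k] c l j)) =
          ∑ m, b m ⊗ₜ[k] (c m l ⊗ₜ[k] c l j) from by
        rw [map_tmul]
        simp only [LinearMap.id_coe, id_eq]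
        rw [hρb l, TensorProduct.sum_tmul, map_sum]
        exact Finset.sum_congr rfl fun m _ => by simp]
      rw [Finset.sum_comm]
      exact Finset.sum_congr rfl fun m _ => by rw [TensorProduct.tmul_sum]
    have := congrArg ψ (hLHS.symm.trans (h.trans hRHS))
    rw [hψ_sum, hψ_sum] at this
    exact this.symm
  have e1 : trace k V (coact ρ (drinfeld R)) =
      ∑ i, ∑ l, R (c l i ⊗ₜ[k] HopfAlgebra.antipode (R := k) (c i l)) := by
    rw [M1]
    exact Finset.sum_congr rfl fun i _ =>
      drinfeld_apply_of R (c i i) Finset.univ (fun l => c i l) (fun l => c l i) (M2 i i)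
  have e2 : trace k V (coact ρ (drinfeld R ∘ₗ HopfAlgebra.antipode (R := k))) =
      ∑ i, ∑ l, R (c i l ⊗ₜ[k] HopfAlgebra.antipode (R := k) (c l i)) := by
    rw [M1]
    refine Finset.sum_congr rfl fun i _ => ?_
    rw [LinearMap.comp_apply]
    exact drinfeld_antipode_apply_of R hR (c i i) Finset.univ
      (fun l => c i l) (fun l => c l i) (M2 i i)
  rw [e1, e2, Finset.sum_comm]


end

end
end

section
/- Let g be a finite-dimensional Lie algebra over a field k of characteristic 0 and let r ∈ g⊗g be a skew-symmetric solution of the classical Yang–Baxter equation which is nondegenerate, i.e. the linear map φ : g* → g, f ↦ (f⊗id)(r), is bijective. Define the bilinear form ω on g by ω(x,y) = (φ⁻¹(x))(y). Then ω is a nondegenerate alternating form satisfying the 2-cocycle identity ω([x,y],z) + ω([y,z],x) + ω([z,x],y) = 0 for all x,y,z ∈ g. -/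
open TensorProduct

noncomputable section

attribute [local instance 100] LieRing.ofAssociativeRing

namespace PBWAux

variable {k : Type} [Field k] {g : Type} [LieRing g] [LieAlgebra k g] {n : ℕ}

local notation "V" => (List (Fin n) →₀ k)

/-- weight used for the recursion -/
def wt (i : Fin n) (w : List (Fin n)) : ℕ :=
  w.length * w.length + w.countP (fun a => decide (a < i))

/-- the fundamental recursive action of basis vectors on monomials, with fuel -/
noncomputable def acts (b : Module.Basis (Fin n) k g) : ℕ → Fin n → List (Fin n) → V
  | 0, _, _ => 0
  | _ + 1, i, [] => Finsupp.single [i] 1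
  | f + 1, i, j :: t =>
    if i ≤ j then Finsupp.single (i :: j :: t) 1
    else ((acts b f i t).sum fun u c => c • acts b f j u) +
      ((b.repr ⁅b i, b j⁆).sum fun m c => c • acts b f m t)

lemma acts_zero (b : Module.Basis (Fin n) k g) (i : Fin n) (w : List (Fin n)) :
    acts b 0 i w = 0 := rfl

lemma acts_nil (b : Module.Basis (Fin n) k g) (f : ℕ) (i : Fin n) :
    acts b (f + 1) i [] = Finsupp.single [i] 1 := rfl

lemma acts_cons (b : Module.Basis (Fin n) k g) (f : ℕ) (i j : Fin n) (t : List (Fin n)) :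
    acts b (f + 1) i (j :: t) =
      if i ≤ j then Finsupp.single (i :: j :: t) 1
      else ((acts b f i t).sum fun u c => c • acts b f j u) +
        ((b.repr ⁅b i, b j⁆).sum fun m c => c • acts b f m t) := rfl

/-- stable value -/
def actS (b : Module.Basis (Fin n) k g) (i : Fin n) (w : List (Fin n)) : V :=
  acts b (wt i w + 1) i w

/-- the action of a basis vector as a linear map -/
def A (b : Module.Basis (Fin n) k g) (i : Fin n) : V →ₗ[k] V :=
  Finsupp.lsum k fun w => LinearMap.toSpanSingleton k V
    (actS b i (List.insertionSort (· ≤ ·) w))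

/-- the action of a general element of `g` -/
def rho (b : Module.Basis (Fin n) k g) : g →ₗ[k] (V →ₗ[k] V) :=
  (Finsupp.lsum k fun m => LinearMap.toSpanSingleton k (V →ₗ[k] V) (A b m)) ∘ₗ
    (b.repr : g ≃ₗ[k] (Fin n →₀ k)).toLinearMap

lemma A_single (b : Module.Basis (Fin n) k g) (i : Fin n) (w : List (Fin n)) :
    A b i (Finsupp.single w 1) = actS b i (List.insertionSort (· ≤ ·) w) := by
  simp [A]

lemma A_single_sorted (b : Module.Basis (Fin n) k g) (i : Fin n) {w : List (Fin n)}
    (hw : w.Pairwise (· ≤ ·)) : A b i (Finsupp.single w 1) = actS b i w := by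
  rw [A_single, hw.insertionSort_eq]

lemma rho_apply (b : Module.Basis (Fin n) k g) (x : g) (v : V) :
    rho b x v = (b.repr x).sum fun m c => c • A b m v := by
  simp [rho, Finsupp.lsum_apply, LinearMap.finsupp_sum_apply]

lemma rho_single_t (b : Module.Basis (Fin n) k g) (x : g) {t : List (Fin n)}
    (ht : t.Pairwise (· ≤ ·)) :
    rho b x (Finsupp.single t 1) = (b.repr x).sum fun m c => c • actS b m t := by
  rw [rho_apply]
  refine Finsupp.sum_congr fun m _ => ?_
  rw [A_single_sorted b m ht]


section ListFacts

lemma wt_lt_of_length_lt {i i' : Fin n} {u w : List (Fin n)} (h : u.length < w.length) :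
    wt i' u < wt i w := by
  have h1 : u.countP (fun a => decide (a < i')) ≤ u.length := List.countP_le_length
  have h2 : u.length + 1 ≤ w.length := h
  unfold wt
  nlinarith [Nat.zero_le (w.countP (fun a => decide (a < i)))]

lemma orderedInsert_all_le {j : Fin n} {l : List (Fin n)} (h : ∀ a ∈ l, j ≤ a) :
    List.orderedInsert (· ≤ ·) j l = j :: l := by
  cases l with
  | nil => rfl
  | cons a l =>
    simp only [List.orderedInsert]
    rw [if_pos (h a (by simp))]

end ListFacts

section Master

variable (b : Module.Basis (Fin n) k g)

lemma A_apply (v : V) (j : Fin n) :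
    A b j v = v.sum fun u c => c • actS b j (List.insertionSort (· ≤ ·) u) := by
  simp [A, Finsupp.lsum_apply]
  rfl

theorem master :
    ∀ (N : ℕ) (i : Fin n) (w : List (Fin n)), wt i w < N → w.Pairwise (· ≤ ·) →
      (∀ f, wt i w < f → acts b f i w = actS b i w) ∧
      (∃ e : V, actS b i w = Finsupp.single (List.orderedInsert (· ≤ ·) i w) 1 + e ∧
        ∀ u ∈ e.support, u.Pairwise (· ≤ ·) ∧ u.length ≤ w.length) := by
  intro N
  induction N using Nat.strong_induction_on with
  | _ N IH =>
  intro i w hN hw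
  match w with
  | [] =>
    constructor
    · intro f hf
      match f, hf with
      | f + 1, _ => rw [acts_nil]; rfl
    · refine ⟨0, by simp [actS, acts_nil, List.orderedInsert], fun u hu => by simp at hu⟩
  | j :: t =>
    by_cases hij : i ≤ j
    · constructor
      · intro f hf
        match f, hf with
        | f + 1, _ => rw [acts_cons, if_pos hij]; rw [actS, acts_cons, if_pos hij]
      · refine ⟨0, ?_, fun u hu => by simp at hu⟩
        rw [actS, acts_cons, if_pos hij, List.orderedInsert_cons_of_le _ t hij, add_zero]
    · -- the hard case
      have hji : j < i := not_le.mp hij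
      have hjt : ∀ a ∈ t, j ≤ a := (List.pairwise_cons.mp hw).1
      have ht : t.Pairwise (· ≤ ·) := (List.pairwise_cons.mp hw).2
      set W := j :: t with hWdef
      set T := List.orderedInsert (· ≤ ·) i t with hTdef
      have hTlen : T.length = t.length + 1 := List.orderedInsert_length _ _ _
      have hTsort : T.Pairwise (· ≤ ·) := ht.orderedInsert _ _
      have hTmem : ∀ a ∈ T, j ≤ a := by
        intro a ha
        rcases (List.mem_orderedInsert _).mp ha with h | h
        · exact h ▸ le_of_lt hji
        · exact hjt a h
      have h1 : wt i t < wt i W :=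
        wt_lt_of_length_lt (by rw [hWdef, List.length_cons]; omega)
      have hlow : ∀ (m : Fin n) (u : List (Fin n)), u.length ≤ t.length → wt m u < wt i W := by
        intro m u hu
        exact wt_lt_of_length_lt (by rw [hWdef, List.length_cons]; omega)
      have hT : wt j T < wt i W := by
        have hc0 : T.countP (fun a => decide (a < j)) = 0 := by
          rw [List.countP_eq_zero]
          intro a ha
          simpa using not_lt.mpr (hTmem a ha)
        have hc1 : 1 ≤ W.countP (fun a => decide (a < i)) := by
          rw [hWdef, List.countP_cons_of_pos (by simpa using hji)]
          omega
        show T.length * T.length + _ < W.length * W.length + _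
        rw [hTlen, hc0, show W.length = t.length + 1 from rfl]
        omega
      have IH' : ∀ (i' : Fin n) (w' : List (Fin n)), w'.Pairwise (· ≤ ·) →
          wt i' w' < wt i W →
          (∀ f, wt i' w' < f → acts b f i' w' = actS b i' w') ∧
          (∃ e : V, actS b i' w' = Finsupp.single (List.orderedInsert (· ≤ ·) i' w') 1 + e ∧
            ∀ u ∈ e.support, u.Pairwise (· ≤ ·) ∧ u.length ≤ w'.length) := by
        intro i' w' hs' hlt
        exact IH (wt i W) hN i' w' hlt hs'
      -- the support of the stable value on short sorted words
      have supp_actS : ∀ (m : Fin n) (u : List (Fin n)), u.Pairwise (· ≤ ·) → wt m u < wt i W →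
          ∀ v ∈ (actS b m u).support, v.Pairwise (· ≤ ·) ∧ v.length ≤ u.length + 1 := by
        intro m u hus hu v hv
        obtain ⟨e, he, hesupp⟩ := (IH' m u hus hu).2
        rw [he] at hv
        rcases Finset.mem_union.mp (Finsupp.support_add hv) with h | h
        · have := Finsupp.support_single_subset h
          simp only [Finset.mem_singleton] at this
          subst this
          exact ⟨hus.orderedInsert _ _, by rw [List.orderedInsert_length]⟩
        · obtain ⟨h1', h2'⟩ := hesupp v h
          exact ⟨h1', h2'.trans (Nat.le_succ _)⟩
      -- the main unfolding claim
      have claim : ∀ f, wt i W < f →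
          acts b f i W = A b j (actS b i t) +
            rho b ⁅b i, b j⁆ (Finsupp.single t 1) := by
        intro f hf
        match f, hf with
        | f + 1, hf =>
        have hf' : wt i W ≤ f := Nat.lt_succ_iff.mp hf
        rw [acts_cons, if_neg hij]
        have e_it : acts b f i t = actS b i t :=
          (IH' i t ht h1).1 f (lt_of_lt_of_le h1 hf')
        have first : ((acts b f i t).sum fun u c => c • acts b f j u) =
            A b j (actS b i t) := by
          rw [e_it, A_apply]
          refine Finsupp.sum_congr fun u hu => ?_
          have husort : u.Pairwise (· ≤ ·) ∧ wt j u < wt i W := by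
            obtain ⟨e, he, hesupp⟩ := (IH' i t ht h1).2
            rw [he] at hu
            rcases Finset.mem_union.mp (Finsupp.support_add hu) with h | h
            · have := Finsupp.support_single_subset h
              simp only [Finset.mem_singleton] at this
              subst this
              exact ⟨hTsort, hT⟩
            · obtain ⟨hs1, hs2⟩ := hesupp u h
              exact ⟨hs1, hlow j u hs2⟩
          rw [husort.1.insertionSort_eq]
          rw [(IH' j u husort.1 husort.2).1 f (lt_of_lt_of_le husort.2 hf')]
        have third : ((b.repr ⁅b i, b j⁆).sum fun m c => c • acts b f m t) =
            rho b ⁅b i, b j⁆ (Finsupp.single t 1) := by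
          rw [rho_single_t b _ ht]
          refine Finsupp.sum_congr fun m _ => ?_
          rw [(IH' m t ht (hlow m t le_rfl)).1 f (lt_of_lt_of_le (hlow m t le_rfl) hf')]
        rw [first, third]
      have hstab : ∀ f, wt i W < f → acts b f i W = actS b i W := by
        intro f hf
        exact (claim f hf).trans (claim (wt i W + 1) (Nat.lt_succ_self _)).symm
      refine ⟨hstab, ?_⟩
      -- the decomposition
      obtain ⟨e, he, hesupp⟩ := (IH' i t ht h1).2
      obtain ⟨e', he', hesupp'⟩ := (IH' j T hTsort hT).2
      have hoins : List.orderedInsert (· ≤ ·) j T = List.orderedInsert (· ≤ ·) i W := by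
        rw [orderedInsert_all_le hTmem]
        show _ = List.orderedInsert (· ≤ ·) i (j :: t)
        simp only [List.orderedInsert]
        rw [if_neg hij]
      have hval : actS b i W = Finsupp.single (List.orderedInsert (· ≤ ·) i W) 1 +
          (e' + A b j e + rho b ⁅b i, b j⁆ (Finsupp.single t 1)) := by
        have h0 : actS b i W = A b j (actS b i t) + rho b ⁅b i, b j⁆ (Finsupp.single t 1) :=
          claim (wt i W + 1) (Nat.lt_succ_self _)
        rw [h0, he, map_add, A_single_sorted b j hTsort, he', hoins]
        abel
      refine ⟨_, hval, ?_⟩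
      intro u hu
      rcases Finset.mem_union.mp (Finsupp.support_add hu) with hu | hu
      · rcases Finset.mem_union.mp (Finsupp.support_add hu) with hu | hu
        · obtain ⟨hs1, hs2⟩ := hesupp' u hu
          refine ⟨hs1, ?_⟩
          rw [hTlen] at hs2
          simpa [hWdef] using hs2
        · -- u ∈ support of A b j e
          rw [A_apply] at hu
          have := Finsupp.support_sum hu
          rw [Finset.mem_biUnion] at this
          obtain ⟨v, hv, huv⟩ := this
          obtain ⟨hv1, hv2⟩ := hesupp v hv
          have huv' := Finsupp.support_smul huv
          rw [hv1.insertionSort_eq] at huv'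
          have := supp_actS j v hv1 (hlow j v hv2) u huv'
          exact ⟨this.1, by simp only [hWdef, List.length_cons]; omega⟩
      · -- u ∈ support of rho ⁅b i, b j⁆ (single t 1)
        rw [rho_single_t b _ ht] at hu
        have := Finsupp.support_sum hu
        rw [Finset.mem_biUnion] at this
        obtain ⟨m, hm, hum⟩ := this
        have hum' := Finsupp.support_smul hum
        have := supp_actS m t ht (hlow m t le_rfl) u hum'
        exact ⟨this.1, by simp only [hWdef, List.length_cons]; omega⟩

-- convenient corollaries of the master lemma
lemma stab {i : Fin n} {w : List (Fin n)} (hw : w.Pairwise (· ≤ ·)) {f : ℕ} (hf : wt i w < f) :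
    acts b f i w = actS b i w :=
  (master b (wt i w + 1) i w (Nat.lt_succ_self _) hw).1 f hf

lemma decomp {i : Fin n} {w : List (Fin n)} (hw : w.Pairwise (· ≤ ·)) :
    ∃ e : V, actS b i w = Finsupp.single (List.orderedInsert (· ≤ ·) i w) 1 + e ∧
      ∀ u ∈ e.support, u.Pairwise (· ≤ ·) ∧ u.length ≤ w.length :=
  (master b (wt i w + 1) i w (Nat.lt_succ_self _) hw).2

lemma supp_actS {i : Fin n} {w : List (Fin n)} (hw : w.Pairwise (· ≤ ·)) :
    ∀ v ∈ (actS b i w).support, v.Pairwise (· ≤ ·) ∧ v.length ≤ w.length + 1 := by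
  intro v hv
  obtain ⟨e, he, hesupp⟩ := decomp b hw
  rw [he] at hv
  rcases Finset.mem_union.mp (Finsupp.support_add hv) with h | h
  · have := Finsupp.support_single_subset h
    simp only [Finset.mem_singleton] at this
    subst this
    exact ⟨hw.orderedInsert _ _, by rw [List.orderedInsert_length]⟩
  · obtain ⟨h1', h2'⟩ := hesupp v h
    exact ⟨h1', h2'.trans (Nat.le_succ _)⟩

lemma actS_all_le {i : Fin n} {w : List (Fin n)} (hw : w.Pairwise (· ≤ ·))
    (hall : ∀ a ∈ w, i ≤ a) : actS b i w = Finsupp.single (i :: w) 1 := by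
  match w with
  | [] => rfl
  | j :: t =>
    show acts b (wt i (j :: t) + 1) i (j :: t) = _
    rw [acts_cons, if_pos (hall j (by simp))]

lemma actS_cons_hard {i j : Fin n} {t : List (Fin n)} (hw : (j :: t).Pairwise (· ≤ ·))
    (hij : ¬ i ≤ j) :
    actS b i (j :: t) = A b j (actS b i t) + rho b ⁅b i, b j⁆ (Finsupp.single t 1) := by
  have hji : j < i := not_le.mp hij
  have hjt : ∀ a ∈ t, j ≤ a := (List.pairwise_cons.mp hw).1
  have ht : t.Pairwise (· ≤ ·) := (List.pairwise_cons.mp hw).2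
  set W := j :: t with hWdef
  set T := List.orderedInsert (· ≤ ·) i t with hTdef
  have hTsort : T.Pairwise (· ≤ ·) := ht.orderedInsert _ _
  have hTmem : ∀ a ∈ T, j ≤ a := by
    intro a ha
    rcases (List.mem_orderedInsert _).mp ha with h | h
    · exact h ▸ le_of_lt hji
    · exact hjt a h
  have h1 : wt i t < wt i W :=
    wt_lt_of_length_lt (by rw [hWdef, List.length_cons]; omega)
  have hlow : ∀ (m : Fin n) (u : List (Fin n)), u.length ≤ t.length → wt m u < wt i W := by
    intro m u hu
    exact wt_lt_of_length_lt (by rw [hWdef, List.length_cons]; omega)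
  have hT : wt j T < wt i W := by
    have hc0 : T.countP (fun a => decide (a < j)) = 0 := by
      rw [List.countP_eq_zero]
      intro a ha
      simpa using not_lt.mpr (hTmem a ha)
    have hc1 : 1 ≤ W.countP (fun a => decide (a < i)) := by
      rw [hWdef, List.countP_cons_of_pos (by simpa using hji)]
      omega
    show T.length * T.length + _ < W.length * W.length + _
    rw [List.orderedInsert_length, hc0, show W.length = t.length + 1 from rfl]
    omega
  set F := wt i W with hF
  show acts b (F + 1) i (j :: t) = _
  rw [acts_cons, if_neg hij]
  have e_it : acts b F i t = actS b i t := stab b ht h1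
  have first : ((acts b F i t).sum fun u c => c • acts b F j u) = A b j (actS b i t) := by
    rw [e_it, A_apply]
    refine Finsupp.sum_congr fun u hu => ?_
    have husort : u.Pairwise (· ≤ ·) ∧ wt j u < wt i W := by
      obtain ⟨e, he, hesupp⟩ := decomp b (i := i) ht
      rw [he] at hu
      rcases Finset.mem_union.mp (Finsupp.support_add hu) with h | h
      · have := Finsupp.support_single_subset h
        simp only [Finset.mem_singleton] at this
        subst this
        exact ⟨hTsort, hT⟩
      · obtain ⟨hs1, hs2⟩ := hesupp u h
        exact ⟨hs1, hlow j u hs2⟩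
    rw [husort.1.insertionSort_eq, stab b husort.1 husort.2]
  have third : ((b.repr ⁅b i, b j⁆).sum fun m c => c • acts b F m t) =
      rho b ⁅b i, b j⁆ (Finsupp.single t 1) := by
    rw [rho_single_t b _ ht]
    refine Finsupp.sum_congr fun m _ => ?_
    rw [stab b ht (hlow m t le_rfl)]
  rw [first, third]

/-- The defect operator measuring failure of the commutation relation. -/
def DD (i j : Fin n) : V →ₗ[k] V :=
  A b i ∘ₗ A b j - A b j ∘ₗ A b i - rho b ⁅b i, b j⁆

lemma DD_apply (i j : Fin n) (v : V) :
    DD b i j v = A b i (A b j v) - A b j (A b i v) - rho b ⁅b i, b j⁆ v := rfl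

lemma DD_of_supp (i j : Fin n) (v : V)
    (h : ∀ u ∈ v.support, DD b i j (Finsupp.single u 1) = 0) : DD b i j v = 0 := by
  conv_lhs => rw [← Finsupp.sum_single v]
  rw [map_finsuppSum]
  refine Finset.sum_eq_zero fun u hu => ?_
  show DD b i j (Finsupp.single u (v u)) = 0
  have huv : Finsupp.single u (v u) = (v u) • Finsupp.single u (1 : k) := by
    rw [Finsupp.smul_single, smul_eq_mul, mul_one]
  rw [huv, map_smul, h u hu, smul_zero]

lemma lie_repr (x : g) (m : Fin n) :
    ⁅x, b m⁆ = (b.repr x).sum fun p c => c • ⁅b p, b m⁆ := by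
  set L : g →ₗ[k] g :=
    (((LieModule.toEnd k g g : g →ₗ⁅k⁆ Module.End k g) :
      g →ₗ[k] Module.End k g)).flip (b m) with hL
  have hLx : ∀ y : g, L y = ⁅y, b m⁆ := fun y => rfl
  calc ⁅x, b m⁆ = L x := (hLx x).symm
    _ = L ((b.repr x).sum fun p c => c • b p) := by rw [← Finsupp.linearCombination_apply, b.linearCombination_repr]
    _ = (b.repr x).sum fun p c => c • L (b p) := by
        rw [map_finsuppSum]
        exact Finsupp.sum_congr fun p _ => by rw [map_smul]
    _ = (b.repr x).sum fun p c => c • ⁅b p, b m⁆ := by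
        exact Finsupp.sum_congr fun p _ => by rw [hLx]

lemma rhoD (z : g) (m : Fin n) (v : V) (h : ∀ p : Fin n, DD b p m v = 0) :
    rho b z (A b m v) - A b m (rho b z v) - rho b ⁅z, b m⁆ v = 0 := by
  rw [rho_apply b z (A b m v), rho_apply b z v, map_finsuppSum, lie_repr b z m, map_finsuppSum,
    LinearMap.finsupp_sum_apply]
  rw [← Finsupp.sum_sub, ← Finsupp.sum_sub]
  refine Finset.sum_eq_zero fun p _ => ?_
  have hDp := h p
  rw [DD_apply] at hDp
  show (b.repr z) p • A b p (A b m v) - A b m ((b.repr z) p • A b p v) -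
    rho b ((b.repr z) p • ⁅b p, b m⁆) v = 0
  rw [map_smul, map_smul, LinearMap.smul_apply, ← smul_sub, ← smul_sub, hDp, smul_zero]

lemma jacobi3 (x y z : g) : ⁅⁅x,z⁆,y⁆ - ⁅⁅y,z⁆,x⁆ - ⁅⁅x,y⁆,z⁆ = (0 : g) := by
  have e1 : ⁅⁅x,z⁆,y⁆ = -⁅y,⁅x,z⁆⁆ := (lie_skew _ _).symm
  have e2 : ⁅⁅y,z⁆,x⁆ = -⁅x,⁅y,z⁆⁆ := (lie_skew _ _).symm
  have e3 : ⁅⁅x,y⁆,z⁆ = -⁅z,⁅x,y⁆⁆ := (lie_skew _ _).symm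
  have e4 : ⁅y,⁅x,z⁆⁆ = -⁅y,⁅z,x⁆⁆ := by
    rw [show ⁅x,z⁆ = -⁅z,x⁆ from (lie_skew x z).symm, lie_neg]
  have h2 : ⁅y,⁅z,x⁆⁆ + ⁅x,⁅y,z⁆⁆ + ⁅z,⁅x,y⁆⁆ = 0 := by
    rw [← lie_jacobi x y z]
    abel
  rw [e1, e2, e3, e4, ← h2]
  abel

lemma CM1 {i j : Fin n} {w : List (Fin n)} (hw : w.Pairwise (· ≤ ·)) (hall : ∀ a ∈ w, j ≤ a)
    (hij : ¬ i ≤ j) : DD b i j (Finsupp.single w 1) = 0 := by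
  have hjw : (j :: w).Pairwise (· ≤ ·) := List.pairwise_cons.mpr ⟨hall, hw⟩
  rw [DD_apply, A_single_sorted b j hw, actS_all_le b hw hall, A_single_sorted b i hjw,
    actS_cons_hard b hjw hij, A_single_sorted b i hw]
  abel

theorem CM : ∀ (L : ℕ) (w : List (Fin n)), w.length < L → w.Pairwise (· ≤ ·) →
    ∀ i j : Fin n, DD b i j (Finsupp.single w 1) = 0 := by
  intro L
  induction L using Nat.strong_induction_on with
  | _ L IH =>
  intro w hlen hw
  have IHs : ∀ w' : List (Fin n), w'.length < w.length → w'.Pairwise (· ≤ ·) →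
      ∀ i j : Fin n, DD b i j (Finsupp.single w' 1) = 0 :=
    fun w' h hs => IH w.length hlen w' h hs
  have IHlow : ∀ (i j : Fin n) (v : V),
      (∀ u ∈ v.support, u.Pairwise (· ≤ ·) ∧ u.length < w.length) → DD b i j v = 0 :=
    fun i j v hv => DD_of_supp b i j v fun u hu => IHs u (hv u hu).2 (hv u hu).1 i j
  have main : ∀ i j : Fin n, ¬ i ≤ j → DD b i j (Finsupp.single w 1) = 0 := by
    intro i j hij
    by_cases hall : ∀ a ∈ w, j ≤ a
    · exact CM1 b hw hall hij
    · cases w with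
      | nil => exact absurd (fun a ha => absurd ha List.not_mem_nil) hall
      | cons l t =>
        have hlt : t.Pairwise (· ≤ ·) := (List.pairwise_cons.mp hw).2
        have hl : ∀ a ∈ t, l ≤ a := (List.pairwise_cons.mp hw).1
        have hlj : ¬ j ≤ l := by
          intro hjl
          refine hall fun a ha => ?_
          rcases List.mem_cons.mp ha with h | h
          · exact h ▸ hjl
          · exact le_trans hjl (hl a h)
        have hlj' : l < j := not_le.mp hlj
        have hji : j < i := not_le.mp hij
        have hil : ¬ i ≤ l := not_le.mpr (lt_trans hlj' hji)
        set P := A b j (Finsupp.single t 1) with hP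
        set Q := A b i (Finsupp.single t 1) with hQ
        have hPa : P = actS b j t := A_single_sorted b j hlt
        have hQa : Q = actS b i t := A_single_sorted b i hlt
        have swP : DD b i l P = 0 := by
          rw [hPa]
          obtain ⟨e, he, hesupp⟩ := decomp b (i := j) hlt
          rw [he, map_add]
          have h1 : DD b i l (Finsupp.single (List.orderedInsert (· ≤ ·) j t) 1) = 0 := by
            refine CM1 b (hlt.orderedInsert _ _) (fun a ha => ?_) hil
            rcases (List.mem_orderedInsert _).mp ha with h | h
            · exact h ▸ le_of_lt hlj'
            · exact hl a h
          have h2 : DD b i l e = 0 := by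
            refine IHlow i l e fun u hu => ?_
            obtain ⟨hs1, hs2⟩ := hesupp u hu
            exact ⟨hs1, by simp only [List.length_cons]; omega⟩
          rw [h1, h2, add_zero]
        have swQ : DD b j l Q = 0 := by
          rw [hQa]
          obtain ⟨e, he, hesupp⟩ := decomp b (i := i) hlt
          rw [he, map_add]
          have h1 : DD b j l (Finsupp.single (List.orderedInsert (· ≤ ·) i t) 1) = 0 := by
            refine CM1 b (hlt.orderedInsert _ _) (fun a ha => ?_) hlj
            rcases (List.mem_orderedInsert _).mp ha with h | h
            · exact h ▸ le_of_lt (lt_trans hlj' hji)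
            · exact hl a h
          have h2 : DD b j l e = 0 := by
            refine IHlow j l e fun u hu => ?_
            obtain ⟨hs1, hs2⟩ := hesupp u hu
            exact ⟨hs1, by simp only [List.length_cons]; omega⟩
          rw [h1, h2, add_zero]
        have hAjW : A b j (Finsupp.single (l :: t) 1) =
            A b l P + rho b ⁅b j, b l⁆ (Finsupp.single t 1) := by
          rw [A_single_sorted b j hw, actS_cons_hard b hw hlj, hPa]
        have hAiW : A b i (Finsupp.single (l :: t) 1) =
            A b l Q + rho b ⁅b i, b l⁆ (Finsupp.single t 1) := by
          rw [A_single_sorted b i hw, actS_cons_hard b hw hil, hQa]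
        have hW : Finsupp.single (l :: t) (1 : k) = A b l (Finsupp.single t 1) := by
          rw [A_single_sorted b l hlt, actS_all_le b hlt hl]
        have hDt : ∀ p q : Fin n, DD b p q (Finsupp.single t 1) = 0 :=
          fun p q => IHs t (by simp) hlt p q
        have k1 : A b i (A b l P) = A b l (A b i P) + rho b ⁅b i, b l⁆ P := by
          have h' := swP
          rw [DD_apply, sub_sub, sub_eq_zero] at h'
          exact h'
        have k2 : A b j (A b l Q) = A b l (A b j Q) + rho b ⁅b j, b l⁆ Q := by
          have h' := swQ
          rw [DD_apply, sub_sub, sub_eq_zero] at h'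
          exact h'
        have k3 : A b i P - A b j Q = rho b ⁅b i, b j⁆ (Finsupp.single t 1) := by
          have h' := hDt i j
          rw [DD_apply] at h'
          exact sub_eq_zero.mp h'
        have r1 : rho b ⁅b i, b l⁆ P =
            A b j (rho b ⁅b i, b l⁆ (Finsupp.single t 1)) +
              rho b ⁅⁅b i, b l⁆, b j⁆ (Finsupp.single t 1) := by
          have h' := rhoD b ⁅b i, b l⁆ j (Finsupp.single t 1) (fun p => hDt p j)
          rw [sub_sub, sub_eq_zero] at h'
          exact h'
        have r2 : rho b ⁅b j, b l⁆ Q =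
            A b i (rho b ⁅b j, b l⁆ (Finsupp.single t 1)) +
              rho b ⁅⁅b j, b l⁆, b i⁆ (Finsupp.single t 1) := by
          have h' := rhoD b ⁅b j, b l⁆ i (Finsupp.single t 1) (fun p => hDt p i)
          rw [sub_sub, sub_eq_zero] at h'
          exact h'
        have r3 : rho b ⁅b i, b j⁆ (Finsupp.single (l :: t) 1) =
            A b l (rho b ⁅b i, b j⁆ (Finsupp.single t 1)) +
              rho b ⁅⁅b i, b j⁆, b l⁆ (Finsupp.single t 1) := by
          rw [hW]
          have h' := rhoD b ⁅b i, b j⁆ l (Finsupp.single t 1) (fun p => hDt p l)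
          rw [sub_sub, sub_eq_zero] at h'
          exact h'
        have hbr : rho b ⁅⁅b i, b l⁆, b j⁆ (Finsupp.single t 1) =
            rho b ⁅⁅b j, b l⁆, b i⁆ (Finsupp.single t 1) +
              rho b ⁅⁅b i, b j⁆, b l⁆ (Finsupp.single t 1) := by
          have hj := jacobi3 (b i) (b j) (b l)
          have hzero : rho b (⁅⁅b i, b l⁆, b j⁆ - ⁅⁅b j, b l⁆, b i⁆ - ⁅⁅b i, b j⁆, b l⁆)
              (Finsupp.single t 1) = 0 := by
            rw [hj, map_zero]
            rfl
          rw [map_sub, map_sub, LinearMap.sub_apply, LinearMap.sub_apply, sub_sub,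
            sub_eq_zero] at hzero
          exact hzero
        have hAl' : A b l (A b i P) =
            A b l (rho b ⁅b i, b j⁆ (Finsupp.single t 1)) + A b l (A b j Q) := by
          rw [sub_eq_iff_eq_add.mp k3, map_add]
        rw [DD_apply, hAjW, hAiW, map_add, map_add, k1, k2, r1, r2, r3, hAl', hbr]
        abel
  intro i j
  rcases lt_trichotomy i j with h | h | h
  · have hmain := main j i (not_le.mpr h)
    rw [DD_apply] at hmain ⊢
    have hskw : ⁅b i, b j⁆ = -⁅b j, b i⁆ := (lie_skew (b i) (b j)).symm
    rw [hskw, map_neg, LinearMap.neg_apply]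
    have hid : A b i (A b j (Finsupp.single w 1)) - A b j (A b i (Finsupp.single w 1)) -
        -(rho b ⁅b j, b i⁆ (Finsupp.single w 1)) =
        -(A b j (A b i (Finsupp.single w 1)) - A b i (A b j (Finsupp.single w 1)) -
          rho b ⁅b j, b i⁆ (Finsupp.single w 1)) := by abel
    rw [hid, hmain, neg_zero]
  · subst h
    rw [DD_apply, lie_self, map_zero, LinearMap.zero_apply, sub_zero, sub_self]
  · exact main i j (not_le.mpr h)

lemma A_sort (m : Fin n) (u : List (Fin n)) :
    A b m (Finsupp.single u 1) =
      A b m (Finsupp.single (List.insertionSort (· ≤ ·) u) 1) := by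
  rw [A_single, A_single, (List.pairwise_insertionSort _ u).insertionSort_eq]

lemma rho_sort (x : g) (u : List (Fin n)) :
    rho b x (Finsupp.single u 1) =
      rho b x (Finsupp.single (List.insertionSort (· ≤ ·) u) 1) := by
  rw [rho_apply, rho_apply]
  refine Finsupp.sum_congr fun m _ => ?_
  rw [A_sort]

lemma DD_all (i j : Fin n) (u : List (Fin n)) : DD b i j (Finsupp.single u 1) = 0 := by
  have h1 : DD b i j (Finsupp.single u 1) =
      DD b i j (Finsupp.single (List.insertionSort (· ≤ ·) u) 1) := by
    rw [DD_apply, DD_apply, A_sort b j u, A_sort b i u, rho_sort]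
  rw [h1]
  exact CM b ((List.insertionSort (· ≤ ·) u).length + 1) _ (Nat.lt_succ_self _)
    (List.pairwise_insertionSort _ u) i j

lemma DD_zero (i j : Fin n) (v : V) : DD b i j v = 0 :=
  DD_of_supp b i j v fun u _ => DD_all b i j u

lemma lie_repr_right (x y : g) :
    ⁅x, y⁆ = (b.repr y).sum fun m c => c • ⁅x, b m⁆ := by
  set L : g →ₗ[k] g :=
    ((LieModule.toEnd k g g : g →ₗ⁅k⁆ Module.End k g) :
      g →ₗ[k] Module.End k g) x with hL
  have hLx : ∀ z : g, L z = ⁅x, z⁆ := fun z => rfl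
  calc ⁅x, y⁆ = L y := (hLx y).symm
    _ = L ((b.repr y).sum fun m c => c • b m) := by rw [← Finsupp.linearCombination_apply, b.linearCombination_repr]
    _ = (b.repr y).sum fun m c => c • L (b m) := by
        rw [map_finsuppSum]
        exact Finsupp.sum_congr fun m _ => by rw [map_smul]
    _ = (b.repr y).sum fun m c => c • ⁅x, b m⁆ := by
        exact Finsupp.sum_congr fun m _ => by rw [hLx]

lemma rho_comm (x y : g) (v : V) :
    rho b x (rho b y v) - rho b y (rho b x v) - rho b ⁅x, y⁆ v = 0 := by
  have RD : ∀ (z : g) (m : Fin n),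
      rho b z (A b m v) - A b m (rho b z v) - rho b ⁅z, b m⁆ v = 0 :=
    fun z m => rhoD b z m v (fun p => DD_zero b p m v)
  rw [show rho b y v = (b.repr y).sum fun m c => c • A b m v from rho_apply b y v,
    lie_repr_right b x y, map_finsuppSum, rho_apply b y (rho b x v),
    map_finsuppSum, LinearMap.finsupp_sum_apply, ← Finsupp.sum_sub, ← Finsupp.sum_sub]
  refine Finset.sum_eq_zero fun m _ => ?_
  show rho b x ((b.repr y) m • A b m v) - (b.repr y) m • A b m (rho b x v) -
    rho b ((b.repr y) m • ⁅x, b m⁆) v = 0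
  rw [map_smul, map_smul, LinearMap.smul_apply, ← smul_sub, ← smul_sub, RD x m, smul_zero]

/-- `rho` as a morphism of Lie algebras. -/
def rhoLie : g →ₗ⁅k⁆ Module.End k (List (Fin n) →₀ k) where
  toLinearMap := rho b
  map_lie' := by
    intro x y
    refine LinearMap.ext fun v => ?_
    have h := rho_comm b x y v
    rw [sub_sub, sub_eq_zero] at h
    show rho b ⁅x, y⁆ v = rho b x (rho b y v) - rho b y (rho b x v)
    rw [h]
    abel

lemma rhoLie_apply (x : g) : (rhoLie b : g →ₗ⁅k⁆ Module.End k (List (Fin n) →₀ k)) x = rho b x := rfl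

theorem iota_inj_of_basis' (bb : Module.Basis (Fin n) k g) :
    Function.Injective
      (((UniversalEnvelopingAlgebra.ι k : g →ₗ⁅k⁆ UniversalEnvelopingAlgebra k g)) :
        g →ₗ[k] UniversalEnvelopingAlgebra k g) := by
  set ιl := (((UniversalEnvelopingAlgebra.ι k : g →ₗ⁅k⁆ UniversalEnvelopingAlgebra k g)) :
    g →ₗ[k] UniversalEnvelopingAlgebra k g) with hιl
  rw [injective_iff_map_eq_zero]
  intro x hx
  have hα := UniversalEnvelopingAlgebra.lift_ι_apply k (rhoLie bb) x
  have hρ : rho bb x = 0 := by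
    rw [← rhoLie_apply bb x, ← hα]
    have : ((UniversalEnvelopingAlgebra.ι k) x : UniversalEnvelopingAlgebra k g) = 0 := hx
    rw [this, map_zero]
  have h0 : rho bb x (Finsupp.single ([] : List (Fin n)) (1 : k)) = 0 := by rw [hρ]; rfl
  rw [rho_apply] at h0
  have hmd : ((bb.repr x).sum fun m c => c • A bb m (Finsupp.single ([] : List (Fin n)) 1)) =
      Finsupp.mapDomain (fun m : Fin n => ([m] : List (Fin n))) (bb.repr x) := by
    rw [Finsupp.mapDomain]
    refine Finsupp.sum_congr fun m _ => ?_
    rw [A_single (b := bb)]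
    show (bb.repr x) m • actS bb m [] = _
    show (bb.repr x) m • Finsupp.single [m] (1 : k) = _
    rw [Finsupp.smul_single, smul_eq_mul, mul_one]
  rw [hmd] at h0
  have hinj : Function.Injective (fun m : Fin n => ([m] : List (Fin n))) := by
    intro a c h
    simpa using h
  have : bb.repr x = 0 := by
    apply Finsupp.mapDomain_injective hinj
    rw [h0, Finsupp.mapDomain_zero]
  have := bb.repr.injective (by rw [this, map_zero] : bb.repr x = bb.repr 0)
  exact this

end Master

theorem uea_iota_injective {k : Type} [Field k] {g : Type} [LieRing g] [LieAlgebra k g]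
    [Module.Finite k g] :
    Function.Injective
      (((UniversalEnvelopingAlgebra.ι k : g →ₗ⁅k⁆ UniversalEnvelopingAlgebra k g)) :
        g →ₗ[k] UniversalEnvelopingAlgebra k g) :=
  iota_inj_of_basis' (Module.finBasis k g)

end PBWAux

namespace CYBEAux

variable {k : Type} [Field k] {g : Type} [LieRing g] [LieAlgebra k g]

def brk : g ⊗[k] g →ₗ[k] g :=
  TensorProduct.lift ((LieModule.toEnd k g g : g →ₗ⁅k⁆ Module.End k g) :
    g →ₗ[k] Module.End k g)

@[simp] lemma brk_tmul (x y : g) : (brk (x ⊗ₜ[k] y) : g) = ⁅x, y⁆ := rfl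

local notation "U" => UniversalEnvelopingAlgebra k g
local notation "ιU" => ((UniversalEnvelopingAlgebra.ι k :
  g →ₗ⁅k⁆ UniversalEnvelopingAlgebra k g) : g →ₗ[k] UniversalEnvelopingAlgebra k g)

def j12 : g ⊗[k] g →ₗ[k] (U ⊗[k] U) ⊗[k] U :=
  ((TensorProduct.mk k (U ⊗[k] U) U).flip 1) ∘ₗ TensorProduct.map ιU ιU

def j13 : g ⊗[k] g →ₗ[k] (U ⊗[k] U) ⊗[k] U :=
  (TensorProduct.map ((TensorProduct.mk k U U).flip (1 : U)) LinearMap.id) ∘ₗ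
    TensorProduct.map ιU ιU

def j23 : g ⊗[k] g →ₗ[k] (U ⊗[k] U) ⊗[k] U :=
  ((TensorProduct.assoc k U U U).symm : U ⊗[k] (U ⊗[k] U) ≃ₗ[k] (U ⊗[k] U) ⊗[k] U).toLinearMap
    ∘ₗ (TensorProduct.mk k U (U ⊗[k] U) 1) ∘ₗ TensorProduct.map ιU ιU

@[simp] lemma j12_tmul (a b : g) : j12 (a ⊗ₜ[k] b) = (ιU a ⊗ₜ[k] ιU b) ⊗ₜ[k] 1 := rfl
@[simp] lemma j13_tmul (a b : g) : j13 (a ⊗ₜ[k] b) = (ιU a ⊗ₜ[k] (1 : U)) ⊗ₜ[k] ιU b := rfl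
@[simp] lemma j23_tmul (a b : g) : j23 (a ⊗ₜ[k] b) = ((1 : U) ⊗ₜ[k] ιU a) ⊗ₜ[k] ιU b := by
  simp [j23]

/-- commutator as a linear map -/
def cmm : ((U ⊗[k] U) ⊗[k] U) ⊗[k] ((U ⊗[k] U) ⊗[k] U) →ₗ[k] (U ⊗[k] U) ⊗[k] U :=
  LinearMap.mul' k _ - (LinearMap.mul' k _) ∘ₗ
    (TensorProduct.comm k _ _).toLinearMap

@[simp] lemma cmm_tmul (x y : (U ⊗[k] U) ⊗[k] U) : cmm (x ⊗ₜ[k] y) = x * y - y * x := by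
  simp [cmm]

def Theta : (g ⊗[k] g) ⊗[k] (g ⊗[k] g) →ₗ[k] (U ⊗[k] U) ⊗[k] U :=
  cmm ∘ₗ TensorProduct.map j12 j13 + cmm ∘ₗ TensorProduct.map j12 j23 +
    cmm ∘ₗ TensorProduct.map j13 j23

def Xi1 : (g ⊗[k] g) ⊗[k] (g ⊗[k] g) →ₗ[k] (g ⊗[k] g) ⊗[k] g :=
  (TensorProduct.assoc k g g g).symm.toLinearMap ∘ₗ
    TensorProduct.map brk LinearMap.id ∘ₗ
      (TensorProduct.tensorTensorTensorComm k g g g g).toLinearMap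

def Xi2 : (g ⊗[k] g) ⊗[k] (g ⊗[k] g) →ₗ[k] (g ⊗[k] g) ⊗[k] g :=
  TensorProduct.map (TensorProduct.map LinearMap.id brk ∘ₗ
      (TensorProduct.assoc k g g g).toLinearMap) LinearMap.id ∘ₗ
    (TensorProduct.assoc k (g ⊗[k] g) g g).symm.toLinearMap

def Xi3 : (g ⊗[k] g) ⊗[k] (g ⊗[k] g) →ₗ[k] (g ⊗[k] g) ⊗[k] g :=
  TensorProduct.map LinearMap.id brk ∘ₗ
    (TensorProduct.tensorTensorTensorComm k g g g g).toLinearMap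

def Xi : (g ⊗[k] g) ⊗[k] (g ⊗[k] g) →ₗ[k] (g ⊗[k] g) ⊗[k] g := Xi1 + Xi2 + Xi3

@[simp] lemma Xi1_tmul (a b c d : g) :
    Xi1 ((a ⊗ₜ[k] b) ⊗ₜ[k] (c ⊗ₜ[k] d)) = (⁅a, c⁆ ⊗ₜ[k] b) ⊗ₜ[k] d := by
  simp [Xi1, tensorTensorTensorComm_tmul]

@[simp] lemma Xi2_tmul (a b c d : g) :
    Xi2 ((a ⊗ₜ[k] b) ⊗ₜ[k] (c ⊗ₜ[k] d)) = (a ⊗ₜ[k] ⁅b, c⁆) ⊗ₜ[k] d := by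
  simp [Xi2]

@[simp] lemma Xi3_tmul (a b c d : g) :
    Xi3 ((a ⊗ₜ[k] b) ⊗ₜ[k] (c ⊗ₜ[k] d)) = (a ⊗ₜ[k] c) ⊗ₜ[k] ⁅b, d⁆ := by
  simp [Xi3, tensorTensorTensorComm_tmul]

lemma Theta_eq_Xi :
    (Theta : (g ⊗[k] g) ⊗[k] (g ⊗[k] g) →ₗ[k] (U ⊗[k] U) ⊗[k] U) =
      TensorProduct.map (TensorProduct.map ιU ιU) ιU ∘ₗ Xi := by
  apply TensorProduct.ext_fourfold'
  intro a b c d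
  have hι : ∀ x y : g, ιU ⁅x, y⁆ = ιU x * ιU y - ιU y * ιU x := by
    intro x y
    have h1 := (UniversalEnvelopingAlgebra.ι k (L := g)).map_lie x y
    rw [Ring.lie_def] at h1
    exact h1
  simp [Theta, Xi, Xi1, Xi2, Xi3, tensorTensorTensorComm_tmul,
    Algebra.TensorProduct.tmul_mul_tmul, hι, sub_tmul, tmul_sub]


def ctr1 (f : Module.Dual k g) : g ⊗[k] g →ₗ[k] g :=
  (TensorProduct.lid k g).toLinearMap ∘ₗ TensorProduct.map f LinearMap.id

def ctr2 (f : Module.Dual k g) : g ⊗[k] g →ₗ[k] g :=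
  (TensorProduct.rid k g).toLinearMap ∘ₗ TensorProduct.map LinearMap.id f

@[simp] lemma ctr1_tmul (f : Module.Dual k g) (a b : g) :
    ctr1 f (a ⊗ₜ[k] b) = f a • b := by simp [ctr1]

@[simp] lemma ctr2_tmul (f : Module.Dual k g) (a b : g) :
    ctr2 f (a ⊗ₜ[k] b) = f b • a := by simp [ctr2]

def pr2 (f h : Module.Dual k g) : g ⊗[k] g →ₗ[k] k :=
  (TensorProduct.lid k k).toLinearMap ∘ₗ TensorProduct.map f h

@[simp] lemma pr2_tmul (f h : Module.Dual k g) (a b : g) :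
    pr2 f h (a ⊗ₜ[k] b) = f a * h b := by simp [pr2]

/-- Evaluation of three functionals against `(g ⊗ g) ⊗ g`. -/
def ev3 (f h l : Module.Dual k g) : (g ⊗[k] g) ⊗[k] g →ₗ[k] k :=
  (TensorProduct.lid k k).toLinearMap ∘ₗ TensorProduct.map (pr2 f h) l

@[simp] lemma ev3_tmul (f h l : Module.Dual k g) (a b c : g) :
    ev3 f h l ((a ⊗ₜ[k] b) ⊗ₜ[k] c) = f a * h b * l c := by simp [ev3, mul_assoc]

lemma ev3_Xi1 (f h l : Module.Dual k g) :
    (ev3 f h l ∘ₗ Xi1 : (g ⊗[k] g) ⊗[k] (g ⊗[k] g) →ₗ[k] k) =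
      f ∘ₗ brk ∘ₗ TensorProduct.map (ctr2 h) (ctr2 l) := by
  apply TensorProduct.ext_fourfold'
  intro a b c d
  simp
  ring

lemma ev3_Xi2 (f h l : Module.Dual k g) :
    (ev3 f h l ∘ₗ Xi2 : (g ⊗[k] g) ⊗[k] (g ⊗[k] g) →ₗ[k] k) =
      h ∘ₗ brk ∘ₗ TensorProduct.map (ctr1 f) (ctr2 l) := by
  apply TensorProduct.ext_fourfold'
  intro a b c d
  simp
  ring

lemma ev3_Xi3 (f h l : Module.Dual k g) :
    (ev3 f h l ∘ₗ Xi3 : (g ⊗[k] g) ⊗[k] (g ⊗[k] g) →ₗ[k] k) =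
      l ∘ₗ brk ∘ₗ TensorProduct.map (ctr1 f) (ctr1 h) := by
  apply TensorProduct.ext_fourfold'
  intro a b c d
  simp
  ring

lemma ctr1_comm_eq_ctr2 (f : Module.Dual k g) (s : g ⊗[k] g) :
    ctr1 f (TensorProduct.comm k g g s) = ctr2 f s := by
  have : (ctr1 f ∘ₗ (TensorProduct.comm k g g).toLinearMap : g ⊗[k] g →ₗ[k] g) = ctr2 f := by
    apply TensorProduct.ext'
    intro a b
    simp
  exact congrArg (fun (F : g ⊗[k] g →ₗ[k] g) => F s) this

lemma pr2_comm_eq (f h : Module.Dual k g) (s : g ⊗[k] g) :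
    pr2 f h (TensorProduct.comm k g g s) = pr2 h f s := by
  have : (pr2 f h ∘ₗ (TensorProduct.comm k g g).toLinearMap : g ⊗[k] g →ₗ[k] k) = pr2 h f := by
    apply TensorProduct.ext'
    intro a b
    simp [mul_comm]
  exact congrArg (fun (F : g ⊗[k] g →ₗ[k] k) => F s) this

lemma apply_ctr1 (f h : Module.Dual k g) (s : g ⊗[k] g) :
    h (ctr1 f s) = pr2 f h s := by
  have : (h ∘ₗ ctr1 f : g ⊗[k] g →ₗ[k] k) = pr2 f h := by
    apply TensorProduct.ext'
    intro a b
    simp [mul_comm]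
  exact congrArg (fun (F : g ⊗[k] g →ₗ[k] k) => F s) this

end CYBEAux

open CYBEAux

/-- Let `g` be a finite-dimensional Lie algebra over a field of
characteristic `0` and `r ∈ g ⊗ g` a skew-symmetric, nondegenerate solution of the classical
Yang–Baxter equation; let `φ : g* → g`, `f ↦ (f ⊗ id) r`, which is assumed bijective.
Then the bilinear form `ω x y = (φ⁻¹ x) y` is a nondegenerate alternating 2-cocycle. -/
theorem inverse_of_nondegenerate_cybe_solution_is_symplectic_cocycle
    {k : Type} [Field k] [CharZero k]
    {g : Type} [LieRing g] [LieAlgebra k g] [Module.Finite k g]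
    (r : g ⊗[k] g)
    (hskew : TensorProduct.comm k g g r = -r)
    (hcybe :
      let U := UniversalEnvelopingAlgebra k g
      let ι : g →ₗ[k] U := (UniversalEnvelopingAlgebra.ι k).toLinearMap
      let r' : U ⊗[k] U := TensorProduct.map ι ι r
      let r₁₂ : (U ⊗[k] U) ⊗[k] U := r' ⊗ₜ (1 : U)
      let r₂₃ : (U ⊗[k] U) ⊗[k] U := (TensorProduct.assoc k U U U).symm ((1 : U) ⊗ₜ r')
      let r₁₃ : (U ⊗[k] U) ⊗[k] U :=
        TensorProduct.map ((TensorProduct.mk k U U).flip (1 : U)) LinearMap.id r'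
      (r₁₂ * r₁₃ - r₁₃ * r₁₂) + (r₁₂ * r₂₃ - r₂₃ * r₁₂) + (r₁₃ * r₂₃ - r₂₃ * r₁₃) = 0)
    (φ : Module.Dual k g →ₗ[k] g)
    (hφ : ∀ f : Module.Dual k g, φ f = TensorProduct.lid k g (TensorProduct.map f LinearMap.id r))
    (hbij : Function.Bijective φ)
    (ω : g → g → k)
    (hω : ∀ x y : g, ω x y = (LinearEquiv.ofBijective φ hbij).symm x y) :
    (∀ x : g, ω x x = 0) ∧ (∀ x : g, (∀ y : g, ω x y = 0) → x = 0) ∧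
      (∀ x y z : g, ω ⁅x, y⁆ z + ω ⁅y, z⁆ x + ω ⁅z, x⁆ y = 0) := by
  set Φ := LinearEquiv.ofBijective φ hbij with hΦ
  have hφc : ∀ u : Module.Dual k g, φ u = ctr1 u r := by
    intro u
    rw [hφ u]
    simp [ctr1]
  have hφΦ : ∀ v : g, φ (Φ.symm v) = v := by
    intro v
    have := Φ.apply_symm_apply v
    rwa [hΦ, LinearEquiv.ofBijective_apply] at this
  -- skew-symmetry of the pairing
  have hpr : ∀ p q : Module.Dual k g, pr2 p q r = -pr2 q p r := by
    intro p q
    have h1 : pr2 q p r = pr2 p q (TensorProduct.comm k g g r) := (pr2_comm_eq p q r).symm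
    rw [hskew, map_neg] at h1
    linear_combination h1
  have hpair : ∀ p q : Module.Dual k g, q (φ p) = -p (φ q) := by
    intro p q
    rw [hφc p, hφc q, apply_ctr1, apply_ctr1, hpr p q]
  have hwsk : ∀ u v : g, (Φ.symm u) v = -((Φ.symm v) u) := by
    intro u v
    calc (Φ.symm u) v = (Φ.symm u) (φ (Φ.symm v)) := by rw [hφΦ]
    _ = -((Φ.symm v) (φ (Φ.symm u))) := hpair _ _
    _ = -((Φ.symm v) u) := by rw [hφΦ]
  refine ⟨?_, ?_, ?_⟩
  · intro x
    have h1 : ω x x = -ω x x := by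
      rw [hω x x]
      exact hwsk x x
    linear_combination h1 / 2
  · intro x hx
    have h0 : Φ.symm x = 0 := by
      ext y
      have := hx y
      rw [hω x y] at this
      simpa using this
    have := congrArg Φ h0
    rw [Φ.apply_symm_apply, map_zero] at this
    exact this
  · -- the cocycle identity
    intro x y z
    -- step 1: CYBE as the vanishing of `Theta (r ⊗ r)`
    have hTheta : Theta (r ⊗ₜ[k] r) = 0 := by
      have hc := hcybe
      simp only [Theta, LinearMap.add_apply, LinearMap.comp_apply, TensorProduct.map_tmul,
        cmm_tmul]
      exact hc
    -- step 2: push down to `g ⊗ g ⊗ g` using injectivity of `ι`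
    have hXi : Xi (r ⊗ₜ[k] r) = 0 := by
      have hmap := congrArg (fun (F : (g ⊗[k] g) ⊗[k] (g ⊗[k] g) →ₗ[k]
          (UniversalEnvelopingAlgebra k g ⊗[k] UniversalEnvelopingAlgebra k g) ⊗[k]
          UniversalEnvelopingAlgebra k g) => F (r ⊗ₜ[k] r)) Theta_eq_Xi
      simp only [LinearMap.comp_apply] at hmap
      rw [hTheta] at hmap
      -- injectivity of the triple tensor of ι
      set ι' := ((UniversalEnvelopingAlgebra.ι k :
        g →ₗ⁅k⁆ UniversalEnvelopingAlgebra k g) : g →ₗ[k] UniversalEnvelopingAlgebra k g)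
      obtain ⟨h, hh⟩ := (LinearMap.exists_leftInverse_of_injective ι'
        (LinearMap.ker_eq_bot.mpr PBWAux.uea_iota_injective))
      have hinj : Function.Injective
          (TensorProduct.map (TensorProduct.map ι' ι') ι') := by
        have hcomp : (TensorProduct.map (TensorProduct.map h h) h) ∘ₗ
            (TensorProduct.map (TensorProduct.map ι' ι') ι') = LinearMap.id := by
          rw [← TensorProduct.map_comp, ← TensorProduct.map_comp, hh,
            TensorProduct.map_id, TensorProduct.map_id]
        intro a b hab
        have := congrArg (TensorProduct.map (TensorProduct.map h h) h) hab
        rwa [← LinearMap.comp_apply, ← LinearMap.comp_apply, hcomp, LinearMap.id_apply,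
          LinearMap.id_apply] at this
      exact hinj (by rw [map_zero, ← hmap])
    -- step 3: evaluate against the three functionals
    set f := Φ.symm x
    set h := Φ.symm y
    set l := Φ.symm z
    have hx : ctr1 f r = x := by rw [← hφc]; exact hφΦ x
    have hy : ctr1 h r = y := by rw [← hφc]; exact hφΦ y
    have hz : ctr1 l r = z := by rw [← hφc]; exact hφΦ z
    have hc2 : ∀ u : Module.Dual k g, ctr2 u r = -ctr1 u r := by
      intro u
      rw [← ctr1_comm_eq_ctr2 u r, hskew, map_neg]
    have e1 : ev3 f h l (Xi1 (r ⊗ₜ[k] r)) = f ⁅y, z⁆ := by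
      have := congrArg (fun (F : (g ⊗[k] g) ⊗[k] (g ⊗[k] g) →ₗ[k] k) =>
        F (r ⊗ₜ[k] r)) (ev3_Xi1 f h l)
      simp only [LinearMap.comp_apply, TensorProduct.map_tmul] at this
      rw [this, hc2, hc2, hy, hz, neg_tmul, tmul_neg, neg_neg, brk_tmul]
    have e2 : ev3 f h l (Xi2 (r ⊗ₜ[k] r)) = -h ⁅x, z⁆ := by
      have := congrArg (fun (F : (g ⊗[k] g) ⊗[k] (g ⊗[k] g) →ₗ[k] k) =>
        F (r ⊗ₜ[k] r)) (ev3_Xi2 f h l)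
      simp only [LinearMap.comp_apply, TensorProduct.map_tmul] at this
      rw [this, hc2, hx, hz, tmul_neg, map_neg, brk_tmul, map_neg]
    have e3 : ev3 f h l (Xi3 (r ⊗ₜ[k] r)) = l ⁅x, y⁆ := by
      have := congrArg (fun (F : (g ⊗[k] g) ⊗[k] (g ⊗[k] g) →ₗ[k] k) =>
        F (r ⊗ₜ[k] r)) (ev3_Xi3 f h l)
      simp only [LinearMap.comp_apply, TensorProduct.map_tmul] at this
      rw [this, hx, hy, brk_tmul]
    have hsum : f ⁅y, z⁆ + (-h ⁅x, z⁆) + l ⁅x, y⁆ = 0 := by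
      rw [← e1, ← e2, ← e3]
      have : Xi1 (r ⊗ₜ[k] r) + Xi2 (r ⊗ₜ[k] r) + Xi3 (r ⊗ₜ[k] r) = 0 := by
        simpa [Xi] using hXi
      calc ev3 f h l (Xi1 (r ⊗ₜ[k] r)) + ev3 f h l (Xi2 (r ⊗ₜ[k] r)) +
            ev3 f h l (Xi3 (r ⊗ₜ[k] r))
          = ev3 f h l (Xi1 (r ⊗ₜ[k] r) + Xi2 (r ⊗ₜ[k] r) + Xi3 (r ⊗ₜ[k] r)) := by
            rw [map_add, map_add]
        _ = 0 := by rw [this, map_zero]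
    -- step 4: convert to ω
    have w1 : ω ⁅y, z⁆ x = -f ⁅y, z⁆ := by rw [hω]; exact hwsk ⁅y, z⁆ x
    have w2 : ω ⁅z, x⁆ y = h ⁅x, z⁆ := by
      rw [hω]
      have := hwsk ⁅z, x⁆ y
      rw [this]
      have hlsk : (⁅z, x⁆ : g) = -⁅x, z⁆ := by rw [← lie_skew]
      rw [hlsk, map_neg]
      simp
      rfl
    have w3 : ω ⁅x, y⁆ z = -l ⁅x, y⁆ := by rw [hω]; exact hwsk ⁅x, y⁆ z
    rw [w1, w2, w3]
    linear_combination -hsum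

end
end
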